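/- In a Euclidean Hurwitz algebra, if u, v are orthonormal vectors orthogonal to 1, then the span of {1, u, v, u·v} is closed under multiplication, and multiplication restricted to this 4-dimensional subspace is associative. -/

import Mathlib

theorem stmt_15 {A : Type*} [NormedAddCommGroup A] [InnerProductSpace ℝ A]
    (mul : A →ₗ[ℝ] A →ₗ[ℝ] A) (e : A) (he : ‖e‖ = 1)
    (hul : ∀ x, mul e x = x) (hur : ∀ x, mul x e = x)
    (hmon : ∀ x y, ‖mul x y‖ = ‖x‖ * ‖y‖)
    (u v : A) (hu : ‖u‖ = 1) (hv : ‖v‖ = 1)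
    (hue : (inner ℝ u e : ℝ) = 0) (hve : (inner ℝ v e : ℝ) = 0)
    (huv : (inner ℝ u v : ℝ) = 0) :
    (∀ x y : A, x ∈ Submodule.span ℝ {e, u, v, mul u v} →
        y ∈ Submodule.span ℝ {e, u, v, mul u v} →
        mul x y ∈ Submodule.span ℝ {e, u, v, mul u v}) ∧
    (∀ x y z : A, x ∈ Submodule.span ℝ {e, u, v, mul u v} →
        y ∈ Submodule.span ℝ {e, u, v, mul u v} →
        z ∈ Submodule.span ℝ {e, u, v, mul u v} →
        mul (mul x y) z = mul x (mul y z)) := by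
  -- basic polarization identities
  have h1 : ∀ a b c : A, (inner ℝ (mul a b) (mul a c) : ℝ) = inner ℝ a a * inner ℝ b c := by
    intro a b c
    have hadd : mul a b + mul a c = mul a (b + c) := by rw [map_add]
    rw [real_inner_eq_norm_add_mul_self_sub_norm_mul_self_sub_norm_mul_self_div_two
        (mul a b) (mul a c),
      real_inner_self_eq_norm_mul_norm,
      real_inner_eq_norm_add_mul_self_sub_norm_mul_self_sub_norm_mul_self_div_two b c,
      hadd, hmon, hmon, hmon]
    ring
  have h2 : ∀ a b c : A, (inner ℝ (mul a c) (mul b c) : ℝ) = inner ℝ a b * inner ℝ c c := by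
    intro a b c
    have hadd : mul a c + mul b c = mul (a + b) c := by
      rw [map_add]; rfl
    rw [real_inner_eq_norm_add_mul_self_sub_norm_mul_self_sub_norm_mul_self_div_two
        (mul a c) (mul b c),
      real_inner_self_eq_norm_mul_norm,
      real_inner_eq_norm_add_mul_self_sub_norm_mul_self_sub_norm_mul_self_div_two a b,
      hadd, hmon, hmon, hmon]
    ring
  have h3 : ∀ a b c d : A, (inner ℝ (mul a b) (mul c d) : ℝ) + inner ℝ (mul c b) (mul a d)
      = 2 * inner ℝ a c * inner ℝ b d := by
    intro a b c d
    have e1 := h1 (a + c) b d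
    simp only [map_add, LinearMap.add_apply, inner_add_left, inner_add_right] at e1
    have e2 := h1 a b d
    have e3 := h1 c b d
    have e4 : (inner ℝ a c : ℝ) = inner ℝ c a := real_inner_comm c a
    linear_combination e1 - e2 - e3 - (inner ℝ b d : ℝ) * e4
  -- scalar square identity
  have sqs : ∀ x z : A, (inner ℝ (mul x x) z : ℝ)
      = 2 * inner ℝ x e * inner ℝ x z - inner ℝ x x * inner ℝ e z := by
    intro x z
    have e1 := h3 x x e z
    rw [hul, hul] at e1
    have e3 : (inner ℝ x (mul x z) : ℝ) = inner ℝ x x * inner ℝ e z := by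
      have := h1 x e z
      rwa [hur] at this
    linarith
  -- useful inner ℝ products
  have hiuu : (inner ℝ u u : ℝ) = 1 := by
    rw [real_inner_self_eq_norm_mul_norm, hu]; norm_num
  have hivv : (inner ℝ v v : ℝ) = 1 := by
    rw [real_inner_self_eq_norm_mul_norm, hv]; norm_num
  have hiww : (inner ℝ (mul u v) (mul u v) : ℝ) = 1 := by
    rw [real_inner_self_eq_norm_mul_norm, hmon, hu, hv]; norm_num
  have hiwe : (inner ℝ (mul u v) e : ℝ) = 0 := by
    have e1 := h3 u v e e
    simp only [hul, hur] at e1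
    have e2 : (inner ℝ v u : ℝ) = 0 := by rw [real_inner_comm]; exact huv
    rw [hue, hve, e2] at e1
    linarith
  have hiwu : (inner ℝ (mul u v) u : ℝ) = 0 := by
    have := h1 u v e
    rwa [hur, hve, mul_zero] at this
  have hiwv : (inner ℝ (mul u v) v : ℝ) = 0 := by
    have := h2 u e v
    rwa [hul, hue, zero_mul] at this
  -- squares
  have sq : ∀ x : A, (inner ℝ x e : ℝ) = 0 → (inner ℝ x x : ℝ) = 1 → mul x x = -e := by
    intro x hxe hxx
    refine ext_inner_right ℝ fun z => ?_
    rw [sqs, hxe, hxx, inner_neg_left]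
    ring
  have huu : mul u u = -e := sq u hue hiuu
  have hvv : mul v v = -e := sq v hve hivv
  have hww : mul (mul u v) (mul u v) = -e := sq (mul u v) hiwe hiww
  -- anticommutativity of orthogonal imaginary elements
  have anti : ∀ x y : A, (inner ℝ x e : ℝ) = 0 → (inner ℝ y e : ℝ) = 0 →
      (inner ℝ x y : ℝ) = 0 → mul x y = - mul y x := by
    intro x y hxe hye hxy
    refine ext_inner_right ℝ fun z => ?_
    have e1 := sqs (x + y) z
    simp only [map_add, LinearMap.add_apply, inner_add_left, inner_add_right] at e1
    have e2 := sqs x z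
    have e3 := sqs y z
    have e4 : (inner ℝ y x : ℝ) = 0 := by rw [real_inner_comm]; exact hxy
    rw [hxe, hye, hxy, e4] at e1
    rw [hxe] at e2
    rw [hye] at e3
    rw [inner_neg_left]
    linarith
  have hvu : mul v u = -(mul u v) := by
    have h := anti u v hue hve huv
    rw [h]; simp
  -- left/right multiplication identities
  have lxx : ∀ x y : A, (inner ℝ x e : ℝ) = 0 → (inner ℝ x x : ℝ) = 1 →
      mul x (mul x y) = -y := by
    intro x y hxe hxx
    refine ext_inner_right ℝ fun z => ?_
    have e1 := h3 x (mul x y) e z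
    rw [hul, hul, hxe] at e1
    have e2 : (inner ℝ (mul x y) (mul x z) : ℝ) = inner ℝ y z := by
      rw [h1, hxx, one_mul]
    rw [inner_neg_left]
    linarith
  have rxx : ∀ x y : A, (inner ℝ x e : ℝ) = 0 → (inner ℝ x x : ℝ) = 1 →
      mul (mul y x) x = -y := by
    intro x y hxe hxx
    refine ext_inner_right ℝ fun z => ?_
    have e1 := h3 (mul y x) x z e
    rw [hur, hur, hxe] at e1
    have e2 : (inner ℝ (mul z x) (mul y x) : ℝ) = inner ℝ y z := by
      rw [h2, hxx, mul_one, real_inner_comm]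
    rw [inner_neg_left]
    linarith
  have huw : mul u (mul u v) = -v := lxx u v hue hiuu
  have hwv : mul (mul u v) v = -u := rxx v u hve hivv
  have hwu : mul (mul u v) u = v := by
    have h := anti (mul u v) u hiwe hue hiwu
    rw [h, huw]; simp
  have hvw : mul v (mul u v) = u := by
    have h4 : (inner ℝ v (mul u v) : ℝ) = 0 := by rw [real_inner_comm]; exact hiwv
    have h := anti v (mul u v) hve hiwe h4
    rw [h, hwv]; simp
  -- representation of span elements
  have rep : ∀ x : A, x ∈ Submodule.span ℝ {e, u, v, mul u v} →
      ∃ a b c d : ℝ, x = a • e + b • u + c • v + d • (mul u v) := by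
    intro x hx
    rcases Submodule.mem_span_insert.1 hx with ⟨a, x1, hx1, rfl⟩
    rcases Submodule.mem_span_insert.1 hx1 with ⟨b, x2, hx2, rfl⟩
    rcases Submodule.mem_span_insert.1 hx2 with ⟨c, x3, hx3, rfl⟩
    rcases Submodule.mem_span_singleton.1 hx3 with ⟨d, rfl⟩
    exact ⟨a, b, c, d, by module⟩
  have combo_mem : ∀ a b c d : ℝ,
      a • e + b • u + c • v + d • (mul u v) ∈ Submodule.span ℝ {e, u, v, mul u v} := by
    intro a b c d
    refine Submodule.add_mem _ (Submodule.add_mem _ (Submodule.add_mem _ ?_ ?_) ?_) ?_ <;>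
      exact Submodule.smul_mem _ _ (Submodule.subset_span (by simp))
  constructor
  · intro x y hx hy
    obtain ⟨a, b, c, d, rfl⟩ := rep x hx
    obtain ⟨a', b', c', d', rfl⟩ := rep y hy
    have key : mul (a • e + b • u + c • v + d • (mul u v))
          (a' • e + b' • u + c' • v + d' • (mul u v))
        = (a * a' - b * b' - c * c' - d * d') • e
          + (a * b' + b * a' + c * d' - d * c') • u
          + (a * c' + c * a' + d * b' - b * d') • v
          + (a * d' + d * a' + b * c' - c * b') • (mul u v) := by
      simp only [map_add, map_smul, LinearMap.add_apply, LinearMap.smul_apply,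
        hul, hur, huu, hvv, hww, hvu, huw, hwv, hwu, hvw]
      module
    rw [key]
    exact combo_mem _ _ _ _
  · intro x y z hx hy hz
    obtain ⟨a, b, c, d, rfl⟩ := rep x hx
    obtain ⟨a', b', c', d', rfl⟩ := rep y hy
    obtain ⟨a'', b'', c'', d'', rfl⟩ := rep z hz
    simp only [map_add, map_smul, LinearMap.add_apply, LinearMap.smul_apply,
      hul, hur, huu, hvv, hww, hvu, huw, hwv, hwu, hvw,
      smul_neg, smul_add, smul_smul, map_neg, LinearMap.neg_apply]
    module
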